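/- Let n ≥ 4 and let d be a symmetric weighted graph on n vertices, written as d = d₁ + d₂ with d₁ ∈ CPI and d₂ orthogonal to CPI. Set T = (1/(n−1)) ∑_{j,k} d j k. Then for every Hamiltonian circuit v : Fin n → Fin n (a bijection), the d-length ∑_{t : Fin n} d (v t) (v (t+1)) equals T plus the d₂-length ∑_{t : Fin n} d₂ (v t) (v (t+1)), where t+1 denotes cyclic addition in Fin n. -/

import Mathlib

/-- A symmetric weighted graph on `n` vertices. -/
def IsSymGraph {n : ℕ} (d : Fin n → Fin n → ℝ) : Prop :=
  (∀ i j, d i j = d j i) ∧ ∀ i, d i i = 0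

/-- The inner product of two weighted graphs. -/
def ginner {n : ℕ} (d e : Fin n → Fin n → ℝ) : ℝ :=
  ∑ i : Fin n, ∑ j : Fin n, d i j * e i j

/-- The cyclic `d`-length of a map `u : Fin m → Fin n`
(the index `t + 1` is taken cyclically, via `finRotate`). -/
def cycLen {n m : ℕ} (d : Fin n → Fin n → ℝ) (u : Fin m → Fin n) : ℝ :=
  ∑ t : Fin m, d (u t) (u (finRotate m t))

/-- Membership in CPI: a symmetric graph whose off-diagonal entries are
`ω i + ω j` for some vertex weights `ω`. -/
def InCPI {n : ℕ} (d : Fin n → Fin n → ℝ) : Prop :=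
  IsSymGraph d ∧ ∃ ω : Fin n → ℝ, ∀ i j, i ≠ j → d i j = ω i + ω j

/-- `d` is orthogonal to every element of CPI. -/
def OrthCPI {n : ℕ} (d : Fin n → Fin n → ℝ) : Prop :=
  ∀ e : Fin n → Fin n → ℝ, InCPI e → ginner d e = 0

/-- The four-cycle graph on pairwise distinct vertices `i j k s`. -/
def fourCycle {n : ℕ} (i j k s : Fin n) : Fin n → Fin n → ℝ :=
  fun a b =>
    if (a, b) = (i, j) ∨ (a, b) = (j, i) then 1
    else if (a, b) = (j, k) ∨ (a, b) = (k, j) then -1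
    else if (a, b) = (k, s) ∨ (a, b) = (s, k) then 1
    else if (a, b) = (s, i) ∨ (a, b) = (i, s) then -1
    else 0

/-- The `d`-length of a Hamiltonian circuit given by a bijection `v`. -/
def hamLen {n : ℕ} (d : Fin n → Fin n → ℝ) (v : Fin n → Fin n) : ℝ :=
  ∑ t : Fin n, d (v t) (v (finRotate n t))

theorem stmt18 (n : ℕ) (hn : 4 ≤ n) (d d₁ d₂ : Fin n → Fin n → ℝ) (hd : IsSymGraph d)
    (h1 : InCPI d₁) (h2 : IsSymGraph d₂) (h2o : OrthCPI d₂) (hdd : d = d₁ + d₂)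
    (v : Fin n → Fin n) (hv : Function.Bijective v) :
    hamLen d v = (1 / ((n : ℝ) - 1)) * (∑ j : Fin n, ∑ k : Fin n, d j k) + hamLen d₂ v := by

  obtain ⟨hs1, ω, hω⟩ := h1
  obtain ⟨m, rfl⟩ : ∃ m, n = m + 1 := ⟨n - 1, by omega⟩
  have hm : 3 ≤ m := by omega
  have hrot : ∀ t : Fin (m + 1), t ≠ finRotate (m + 1) t := by
    intro t h
    rw [finRotate_succ_apply] at h
    have h1 : (0 : Fin (m + 1)) = 1 := by
      have := add_right_cancel (a := (0 : Fin (m+1))) (b := t) (c := (1 : Fin (m+1)))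
        (by simpa [add_comm] using h)
      exact this
    have := congrArg Fin.val h1
    simp [Fin.val_one, Nat.mod_eq_of_lt (show 1 < m + 1 by omega)] at this
  -- hamLen d₁ v = 2 * ∑ ω
  have hsumω : ∀ u : Fin (m+1) → Fin (m+1), Function.Bijective u →
      ∑ t : Fin (m+1), ω (u t) = ∑ i : Fin (m+1), ω i := by
    intro u hu
    exact Fintype.sum_bijective u hu _ _ (fun _ => rfl)
  have h1len : hamLen d₁ v = 2 * ∑ i : Fin (m+1), ω i := by
    unfold hamLen
    have heq : ∀ t : Fin (m+1), d₁ (v t) (v (finRotate (m+1) t))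
        = ω (v t) + ω (v (finRotate (m+1) t)) := by
      intro t
      exact hω _ _ (fun h => hrot t (hv.injective h))
    rw [Finset.sum_congr rfl (fun t _ => heq t), Finset.sum_add_distrib,
      hsumω v hv, hsumω (fun t => v (finRotate (m+1) t)) (hv.comp (finRotate (m+1)).bijective)]
    ring
  -- ∑∑ d₂ = 0
  have hsum2 : ∑ j : Fin (m+1), ∑ k : Fin (m+1), d₂ j k = 0 := by
    have he : InCPI (fun a b : Fin (m+1) => if a = b then (0:ℝ) else 1) := by
      refine ⟨⟨fun i j => ?_, fun i => by simp⟩, fun _ => 1/2, fun i j hij => by simp [hij]; norm_num⟩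
      by_cases h : i = j <;> simp [h, eq_comm]
    have := h2o _ he
    unfold ginner at this
    rw [← this]
    refine Finset.sum_congr rfl (fun i _ => Finset.sum_congr rfl (fun j _ => ?_))
    by_cases h : i = j
    · simp [h, h2.2 j]
    · simp [h]
  -- ∑∑ d₁ = 2 m ∑ ω
  have hsum1 : ∑ j : Fin (m+1), ∑ k : Fin (m+1), d₁ j k
      = 2 * m * ∑ i : Fin (m+1), ω i := by
    have hrow : ∀ j : Fin (m+1), ∑ k : Fin (m+1), d₁ j k
        = (m : ℝ) * ω j + (∑ i : Fin (m+1), ω i - ω j) := by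
      intro j
      rw [← Finset.sum_erase_add _ _ (Finset.mem_univ j), hs1.2 j, add_zero]
      have : ∑ k ∈ Finset.univ.erase j, d₁ j k
          = ∑ k ∈ Finset.univ.erase j, (ω j + ω k) := by
        refine Finset.sum_congr rfl (fun k hk => ?_)
        exact hω j k (Ne.symm (Finset.mem_erase.mp hk).1)
      rw [this, Finset.sum_add_distrib, Finset.sum_const,
        Finset.card_erase_of_mem (Finset.mem_univ j), Finset.card_univ,
        Fintype.card_fin, Finset.sum_erase_eq_sub (Finset.mem_univ j)]
      simp
    rw [Finset.sum_congr rfl (fun j _ => hrow j), Finset.sum_add_distrib,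
      Finset.sum_sub_distrib, ← Finset.mul_sum, Finset.sum_const, Finset.card_univ,
      Fintype.card_fin, nsmul_eq_mul]
    push_cast
    ring
  have hlenadd : hamLen d v = hamLen d₁ v + hamLen d₂ v := by
    unfold hamLen
    rw [← Finset.sum_add_distrib]
    exact Finset.sum_congr rfl (fun t _ => by rw [hdd]; rfl)
  have hsumd : ∑ j : Fin (m+1), ∑ k : Fin (m+1), d j k
      = 2 * m * ∑ i : Fin (m+1), ω i := by
    rw [hdd]
    simp only [Pi.add_apply, Finset.sum_add_distrib]
    rw [hsum1, hsum2, add_zero]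
  rw [hlenadd, hsumd, h1len]
  have hm0 : (m : ℝ) ≠ 0 := by positivity
  push_cast
  field_simp
  ring_nf
  rw [mul_inv_cancel_right₀ hm0]
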